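/- arXiv:2507.08454 — 5 statements merged into one kernel-verified Lean document; each statement's English description precedes it below -/
import Mathlib

section
/- If (θ, θ', χ) satisfies θ ∧ χ ≡ φ ∧ ¬ψ and θ' ∧ χ ≡ ¬φ ∧ ψ (the entailment conditions of the global contrastive explanation problem), then θ is a strong (φ, ψ)-contrast, i.e., φ ∧ ¬ψ ⊨ θ and ¬φ ∧ ψ ⊨ ¬θ. -/
inductive PLF (V : Type) : Type
  | bot  : PLF V
  | var  : V → PLF V
  | neg  : PLF V → PLF V
  | and  : PLF V → PLF V → PLF V
  | or   : PLF V → PLF V → PLF V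

namespace PLF
variable {V : Type}
def eval (s : V → Bool) : PLF V → Bool
  | bot => false
  | var v => s v
  | neg φ => !(eval s φ)
  | and φ ψ => eval s φ && eval s ψ
  | or φ ψ => eval s φ || eval s ψ
end PLF

inductive Lit (V : Type) : Type
  | pos : V → Lit V
  | neg : V → Lit V

namespace Lit
variable {V : Type}
def eval (s : V → Bool) : Lit V → Bool
  | pos v => s v
  | neg v => !(s v)
def compl : Lit V → Lit V
  | pos v => neg v
  | neg v => pos v
def var : Lit V → V
  | pos v => v
  | neg v => v
end Lit

abbrev Clause (V : Type) := List (Lit V)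
abbrev CNF (V : Type) := List (Clause V)

def Clause.ceval {V : Type} (s : V → Bool) (C : Clause V) : Bool := C.any (Lit.eval s)
def CNF.feval {V : Type} (s : V → Bool) (F : CNF V) : Bool := F.all (Clause.ceval s)
def CNF.size {V : Type} (F : CNF V) : Nat := (F.map List.length).sum
def Term.teval {V : Type} (s : V → Bool) (t : List (Lit V)) : Bool := t.all (Lit.eval s)

theorem stmt0 {V : Type} (φ ψ θ θ' χ : PLF V)
    (h1 : ∀ s, (θ.and χ).eval s = (φ.and ψ.neg).eval s)
    (h2 : ∀ s, (θ'.and χ).eval s = (φ.neg.and ψ).eval s) :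
    (∀ s, (φ.and ψ.neg).eval s = true → θ.eval s = true) ∧
    (∀ s, (φ.neg.and ψ).eval s = true → θ.neg.eval s = true) := by
  constructor
  · intro s hs
    have := h1 s
    rw [hs] at this
    simp [PLF.eval] at this
    exact this.1
  · intro s hs
    have hh1 := h1 s
    have hh2 := h2 s
    rw [hs] at hh2
    simp [PLF.eval] at hs hh1 hh2 ⊢
    rw [hh2.2, hs.1] at hh1
    simpa using hh1
end

section
/- Let S define a partial assignment (i.e., S is equivalent to a consistent conjunction of literals), and suppose CNF formulas (θ, θ', χ) form an optimal output of the counterfactual difference problem with input (S, φ, ψ): S ≡ θ ∧ χ ⊨ φ ∧ ¬ψ, θ' ∧ χ ⊨ ¬φ ∧ ψ, θ' ∧ χ is satisfiable iff S is satisfiable, with total size minimized. Then θ and θ' are themselves conjunctions of literals (partial assignments). -/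
open Classical

namespace Stmt7Aux

variable {V : Type}

lemma feval_iff (s : V → Bool) (F : CNF V) :
    F.feval s = true ↔ ∀ C ∈ F, Clause.ceval s C = true := by
  simp [CNF.feval]

lemma ceval_iff (s : V → Bool) (C : Clause V) :
    Clause.ceval s C = true ↔ ∃ ℓ ∈ C, ℓ.eval s = true := by
  simp [Clause.ceval]

lemma teval_iff (s : V → Bool) (t : List (Lit V)) :
    Term.teval s t = true ↔ ∀ ℓ ∈ t, ℓ.eval s = true := by
  simp [Term.teval]

lemma size_nil : CNF.size ([] : CNF V) = 0 := rfl

lemma size_cons (D : Clause V) (F : CNF V) : CNF.size (D :: F) = D.length + F.size := by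
  simp [CNF.size]

noncomputable def repl (F : CNF V) (C : Clause V) (ℓ : Lit V) : CNF V :=
  F.map (fun D => if D = C then [ℓ] else D)

noncomputable def rem (F : CNF V) (C : Clause V) : CNF V :=
  F.filter (fun D => !decide (D = C))

lemma repl_feval_mp {F : CNF V} {C : Clause V} {ℓ : Lit V} (hℓ : ℓ ∈ C)
    {s : V → Bool} (h : (repl F C ℓ).feval s = true) : F.feval s = true := by
  rw [feval_iff] at h ⊢
  intro D hD
  have hmem : (if D = C then [ℓ] else D) ∈ repl F C ℓ := List.mem_map_of_mem (f := fun D => if D = C then [ℓ] else D) hD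
  have h2 := h _ hmem
  by_cases hDC : D = C
  · rw [if_pos hDC] at h2
    rw [ceval_iff] at h2 ⊢
    obtain ⟨ℓ', hℓ', he⟩ := h2
    simp at hℓ'
    subst hDC
    exact ⟨ℓ', by rw [hℓ']; exact hℓ, he⟩
  · rwa [if_neg hDC] at h2

lemma repl_feval_mpr {F : CNF V} (C : Clause V) {ℓ : Lit V}
    {s : V → Bool} (hF : F.feval s = true) (hℓ : ℓ.eval s = true) :
    (repl F C ℓ).feval s = true := by
  rw [feval_iff] at hF ⊢
  intro D hD
  rw [repl] at hD
  obtain ⟨E, hE, rfl⟩ := List.mem_map.mp hD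
  by_cases hEC : E = C
  · rw [if_pos hEC, ceval_iff]; exact ⟨ℓ, by simp, hℓ⟩
  · rw [if_neg hEC]; exact hF E hE

lemma repl_size_le (F : CNF V) (C : Clause V) (ℓ : Lit V) (hC : 1 ≤ C.length) :
    (repl F C ℓ).size ≤ F.size := by
  induction F with
  | nil => simp [repl, CNF.size]
  | cons D F ih =>
    show CNF.size ((if D = C then [ℓ] else D) :: repl F C ℓ) ≤ _
    rw [size_cons, size_cons]
    by_cases hDC : D = C
    · rw [if_pos hDC, hDC]; simp only [List.length_singleton]; omega
    · rw [if_neg hDC]; omega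

lemma repl_size_lt {F : CNF V} {C : Clause V} (ℓ : Lit V) (hC : C ∈ F) (hlen : 2 ≤ C.length) :
    (repl F C ℓ).size < F.size := by
  induction F with
  | nil => simp at hC
  | cons D F ih =>
    show CNF.size ((if D = C then [ℓ] else D) :: repl F C ℓ) < _
    rw [size_cons, size_cons]
    have hle := repl_size_le F C ℓ (by omega)
    rcases List.mem_cons.mp hC with h | h
    · rw [if_pos h.symm, h.symm]; simp only [List.length_singleton]; omega
    · have := ih h
      by_cases hDC : D = C
      · rw [if_pos hDC, hDC]; simp only [List.length_singleton]; omega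
      · rw [if_neg hDC]; omega

lemma rem_feval_mp {F : CNF V} {C : Clause V} {s : V → Bool}
    (h : F.feval s = true) : (rem F C).feval s = true := by
  rw [feval_iff] at h ⊢
  intro D hD
  exact h D (List.mem_of_mem_filter hD)

lemma rem_feval_mpr {F : CNF V} {C : Clause V} {s : V → Bool}
    (h : (rem F C).feval s = true) (hC : Clause.ceval s C = true) : F.feval s = true := by
  rw [feval_iff] at h ⊢
  intro D hD
  by_cases hDC : D = C
  · rw [hDC]; exact hC
  · exact h D (List.mem_filter.mpr ⟨hD, by simp [hDC]⟩)

lemma rem_size_le (F : CNF V) (C : Clause V) : (rem F C).size ≤ F.size := by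
  induction F with
  | nil => simp [rem, CNF.size]
  | cons D F ih =>
    rw [rem] at ih ⊢
    by_cases hDC : D = C
    · rw [List.filter_cons_of_neg (by simp [hDC]), size_cons]
      exact le_trans ih (by omega)
    · rw [List.filter_cons_of_pos (by simp [hDC]), size_cons, size_cons]
      omega

lemma rem_size_lt {F : CNF V} {C : Clause V} (hC : C ∈ F) (hlen : 1 ≤ C.length) :
    (rem F C).size < F.size := by
  induction F with
  | nil => simp at hC
  | cons D F ih =>
    have hle := rem_size_le F C
    rw [rem] at ih hle ⊢
    by_cases hDC : D = C
    · rw [List.filter_cons_of_neg (by simp [hDC]), size_cons]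
      subst hDC
      omega
    · rw [List.filter_cons_of_pos (by simp [hDC]), size_cons, size_cons]
      have := ih ((List.mem_cons.mp hC).resolve_left (fun h => hDC h.symm))
      omega

lemma share (t : List (Lit V)) (C : Clause V)
    (hcons : ∃ s, Term.teval s t = true)
    (hnt : ∀ v, Lit.pos v ∈ C → Lit.neg v ∉ C)
    (hent : ∀ s, Term.teval s t = true → Clause.ceval s C = true) :
    ∃ ℓ ∈ C, ℓ ∈ t := by
  obtain ⟨s₁, hs₁⟩ := hcons
  have hnc : ∀ v, Lit.pos v ∈ t → Lit.neg v ∉ t := by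
    intro v hp hn
    have h1 := (teval_iff s₁ t).mp hs₁ _ hp
    have h2 := (teval_iff s₁ t).mp hs₁ _ hn
    simp [Lit.eval] at h1 h2
    rw [h1] at h2
    simp at h2
  set s : V → Bool := fun v => if Lit.pos v ∈ t then true
    else if Lit.neg v ∈ t then false
    else if Lit.neg v ∈ C then true else false with hsdef
  have hts : Term.teval s t = true := by
    rw [teval_iff]
    intro ℓ hℓ
    cases ℓ with
    | pos v => simp [Lit.eval, hsdef, hℓ]
    | neg v =>
      have hp : Lit.pos v ∉ t := fun hp => hnc v hp hℓ
      simp [Lit.eval, hsdef, hp, hℓ]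
  obtain ⟨ℓ, hℓC, hℓs⟩ := (ceval_iff s C).mp (hent s hts)
  refine ⟨ℓ, hℓC, ?_⟩
  by_contra hmem
  cases ℓ with
  | pos v =>
    have hnC : Lit.neg v ∉ C := hnt v hℓC
    by_cases hn : Lit.neg v ∈ t
    · simp [Lit.eval, hsdef, hmem, hn] at hℓs
    · simp [Lit.eval, hsdef, hmem, hn, hnC] at hℓs
  | neg v =>
    by_cases hp : Lit.pos v ∈ t
    · simp [Lit.eval, hsdef, hp] at hℓs
    · simp [Lit.eval, hsdef, hp, hmem, hℓC] at hℓs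

end Stmt7Aux
theorem stmt7 {V : Type} (S : Finset (PLF V)) (φ ψ : PLF V) (θ θ' χ : CNF V)
    (hdef : ∃ t : List (Lit V), (∃ s, Term.teval s t = true) ∧
      ∀ s, (∀ σ ∈ S, σ.eval s = true) ↔ Term.teval s t = true)
    (heqv : ∀ s, (∀ σ ∈ S, σ.eval s = true) ↔ (θ.feval s && χ.feval s) = true)
    (hφ : ∀ s, (θ.feval s && χ.feval s) = true → (φ.and ψ.neg).eval s = true)
    (hψ : ∀ s, (θ'.feval s && χ.feval s) = true → (φ.neg.and ψ).eval s = true)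
    (hsat : (∃ s, (θ'.feval s && χ.feval s) = true) ↔ (∃ s, ∀ σ ∈ S, σ.eval s = true))
    (hmin : ∀ θ₂ θ'₂ χ₂ : CNF V,
      (∀ s, (∀ σ ∈ S, σ.eval s = true) ↔ (θ₂.feval s && χ₂.feval s) = true) →
      (∀ s, (θ₂.feval s && χ₂.feval s) = true → (φ.and ψ.neg).eval s = true) →
      (∀ s, (θ'₂.feval s && χ₂.feval s) = true → (φ.neg.and ψ).eval s = true) →
      ((∃ s, (θ'₂.feval s && χ₂.feval s) = true) ↔ (∃ s, ∀ σ ∈ S, σ.eval s = true)) →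
      θ.size + θ'.size + χ.size ≤ θ₂.size + θ'₂.size + χ₂.size) :
    ((∀ C ∈ θ, ∃ ℓ, C = [ℓ]) ∧ (∃ s, θ.feval s = true)) ∧
    ((∀ C ∈ θ', ∃ ℓ, C = [ℓ]) ∧ (∃ s, θ'.feval s = true)) := by
  classical
  open Stmt7Aux in
  obtain ⟨t, ⟨st, hst⟩, ht⟩ := hdef
  have key : ∀ s, Term.teval s t = true ↔ (θ.feval s && χ.feval s) = true :=
    fun s => (ht s).symm.trans (heqv s)
  have hθχst : (θ.feval st && χ.feval st) = true := (key st).mp hst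
  rw [Bool.and_eq_true] at hθχst
  have hSsat : ∃ s, ∀ σ ∈ S, σ.eval s = true := ⟨st, (ht st).mpr hst⟩
  obtain ⟨s₀, hs₀⟩ := hsat.mpr hSsat
  rw [Bool.and_eq_true] at hs₀
  refine ⟨⟨?_, st, hθχst.1⟩, ⟨?_, s₀, hs₀.1⟩⟩
  · -- every clause of θ is a unit clause
    intro C hC
    rcases C with _ | ⟨ℓ₁, _ | ⟨ℓ₂, rest⟩⟩
    · exfalso
      have := (Stmt7Aux.feval_iff st θ).mp hθχst.1 [] hC
      simp [Clause.ceval] at this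
    · exact ⟨ℓ₁, rfl⟩
    · exfalso
      set C : Clause V := ℓ₁ :: ℓ₂ :: rest with hCdef
      have hlen : 2 ≤ C.length := by simp [hCdef]
      by_cases htaut : ∃ v, Lit.pos v ∈ C ∧ Lit.neg v ∈ C
      · -- tautological clause: remove it
        obtain ⟨v, hp, hn⟩ := htaut
        have hCtrue : ∀ s, Clause.ceval s C = true := by
          intro s
          rw [Stmt7Aux.ceval_iff]
          cases hsv : s v
          · exact ⟨Lit.neg v, hn, by simp [Lit.eval, hsv]⟩
          · exact ⟨Lit.pos v, hp, by simp [Lit.eval, hsv]⟩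
        have himp : ∀ s, ((Stmt7Aux.rem θ C).feval s && χ.feval s) = true →
            (θ.feval s && χ.feval s) = true := by
          intro s h
          rw [Bool.and_eq_true] at h ⊢
          exact ⟨Stmt7Aux.rem_feval_mpr h.1 (hCtrue s), h.2⟩
        have heqv₂ : ∀ s, (∀ σ ∈ S, σ.eval s = true) ↔
            ((Stmt7Aux.rem θ C).feval s && χ.feval s) = true := by
          intro s
          rw [heqv s]
          constructor
          · intro h
            rw [Bool.and_eq_true] at h ⊢
            exact ⟨Stmt7Aux.rem_feval_mp h.1, h.2⟩
          · exact himp s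
        have hle := hmin (Stmt7Aux.rem θ C) θ' χ heqv₂
          (fun s h => hφ s (himp s h)) hψ hsat
        have hlt := Stmt7Aux.rem_size_lt hC (by omega)
        omega
      · -- non-tautological: shares a literal with t
        push_neg at htaut
        have hshare := Stmt7Aux.share t C ⟨st, hst⟩ htaut
          (fun s hs => (Stmt7Aux.feval_iff s θ).mp
            ((Bool.and_eq_true _ _).mp ((key s).mp hs)).1 C hC)
        obtain ⟨ℓ, hℓC, hℓt⟩ := hshare
        have himp : ∀ s, ((Stmt7Aux.repl θ C ℓ).feval s && χ.feval s) = true →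
            (θ.feval s && χ.feval s) = true := by
          intro s h
          rw [Bool.and_eq_true] at h ⊢
          exact ⟨Stmt7Aux.repl_feval_mp hℓC h.1, h.2⟩
        have heqv₂ : ∀ s, (∀ σ ∈ S, σ.eval s = true) ↔
            ((Stmt7Aux.repl θ C ℓ).feval s && χ.feval s) = true := by
          intro s
          constructor
          · intro h
            have hts : Term.teval s t = true := (ht s).mp h
            have hθχs := (key s).mp hts
            rw [Bool.and_eq_true] at hθχs ⊢
            have hℓs : ℓ.eval s = true := (Stmt7Aux.teval_iff s t).mp hts ℓ hℓt
            exact ⟨Stmt7Aux.repl_feval_mpr C hθχs.1 hℓs, hθχs.2⟩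
          · intro h
            exact (heqv s).mpr (himp s h)
        have hle := hmin (Stmt7Aux.repl θ C ℓ) θ' χ heqv₂
          (fun s h => hφ s (himp s h)) hψ hsat
        have hlt := Stmt7Aux.repl_size_lt ℓ hC hlen
        omega
  · -- every clause of θ' is a unit clause
    intro C hC
    rcases C with _ | ⟨ℓ₁, _ | ⟨ℓ₂, rest⟩⟩
    · exfalso
      have := (Stmt7Aux.feval_iff s₀ θ').mp hs₀.1 [] hC
      simp [Clause.ceval] at this
    · exact ⟨ℓ₁, rfl⟩
    · exfalso
      set C : Clause V := ℓ₁ :: ℓ₂ :: rest with hCdef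
      have hlen : 2 ≤ C.length := by simp [hCdef]
      have hCs₀ := (Stmt7Aux.feval_iff s₀ θ').mp hs₀.1 C hC
      obtain ⟨ℓ, hℓC, hℓs₀⟩ := (Stmt7Aux.ceval_iff s₀ C).mp hCs₀
      have himp : ∀ s, ((Stmt7Aux.repl θ' C ℓ).feval s && χ.feval s) = true →
          (θ'.feval s && χ.feval s) = true := by
        intro s h
        rw [Bool.and_eq_true] at h ⊢
        exact ⟨Stmt7Aux.repl_feval_mp hℓC h.1, h.2⟩
      have hsat₂ : (∃ s, ((Stmt7Aux.repl θ' C ℓ).feval s && χ.feval s) = true) ↔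
          (∃ s, ∀ σ ∈ S, σ.eval s = true) := by
        constructor
        · intro _; exact hSsat
        · intro _
          refine ⟨s₀, ?_⟩
          rw [Bool.and_eq_true]
          exact ⟨Stmt7Aux.repl_feval_mpr C hs₀.1 hℓs₀, hs₀.2⟩
      have hle := hmin θ (Stmt7Aux.repl θ' C ℓ) χ heqv hφ
        (fun s h => hψ s (himp s h)) hsat₂
      have hlt := Stmt7Aux.repl_size_lt ℓ hC hlen
      omega
end

section
/- Let S define a partial assignment and suppose CNF formulas (θ, θ', χ) form an optimal output of the counterfactual difference problem with input (S, φ, ψ) (S ≡ θ ∧ χ ⊨ φ ∧ ¬ψ, θ' ∧ χ ⊨ ¬φ ∧ ψ, θ' ∧ χ satisfiable iff S satisfiable, total size minimal). Then θ' ∧ χ is logically equivalent to some partial assignment (consistent conjunction of literals). -/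
section Helpers
variable {V : Type}

lemma feval_iff (s : V → Bool) (F : CNF V) :
    F.feval s = true ↔ ∀ C ∈ F, Clause.ceval s C = true := by
  simp [CNF.feval, List.all_eq_true]

lemma ceval_iff (s : V → Bool) (C : Clause V) :
    Clause.ceval s C = true ↔ ∃ l ∈ C, l.eval s = true := by
  simp [Clause.ceval, List.any_eq_true]

lemma teval_iff (s : V → Bool) (t : List (Lit V)) :
    Term.teval s t = true ↔ ∀ l ∈ t, l.eval s = true := by
  simp [Term.teval, List.all_eq_true]

lemma size_split (pre post : CNF V) (C : Clause V) :
    CNF.size (pre ++ C :: post) = CNF.size pre + C.length + CNF.size post := by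
  simp [CNF.size]; ring

lemma size_append (F G : CNF V) : CNF.size (F ++ G) = CNF.size F + CNF.size G := by
  simp [CNF.size]

/-- a consistent term entailing a non-tautological clause entails one of its literals -/
lemma term_clause_lit (t : List (Lit V)) (C : Clause V)
    (hc : ∃ s, Term.teval s t = true)
    (hent : ∀ s, Term.teval s t = true → Clause.ceval s C = true)
    (hnt : ¬ ∃ v, Lit.pos v ∈ C ∧ Lit.neg v ∈ C) :
    ∃ l ∈ C, ∀ s, Term.teval s t = true → l.eval s = true := by
  classical
  by_contra hno
  push_neg at hno
  obtain ⟨s0, hs0⟩ := hc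
  push_neg at hnt
  -- build assignment falsifying C while satisfying t
  set s : V → Bool := fun v =>
    if Lit.pos v ∈ C then false else if Lit.neg v ∈ C then true else s0 v with hs
  have hst : Term.teval s t = true := by
    rw [teval_iff]
    intro m hm
    have hment : ∀ s', Term.teval s' t = true → m.eval s' = true := by
      intro s' hs'
      exact (teval_iff s' t).mp hs' m hm
    cases m with
    | pos v =>
      have hpv : Lit.pos v ∉ C := by
        intro hmem
        obtain ⟨s', hber, hfalse⟩ := hno (Lit.pos v) hmem
        exact hfalse (hment s' hber)
      by_cases hnv : Lit.neg v ∈ C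
      · simp [Lit.eval, hs, hpv, hnv]
      · have : s0 v = true := hment s0 hs0
        simp [Lit.eval, hs, hpv, hnv, this]
    | neg v =>
      have hnv : Lit.neg v ∉ C := by
        intro hmem
        obtain ⟨s', hber, hfalse⟩ := hno (Lit.neg v) hmem
        exact hfalse (hment s' hber)
      by_cases hpv : Lit.pos v ∈ C
      · simp [Lit.eval, hs, hpv]
      · have : (!(s0 v)) = true := hment s0 hs0
        simp [Lit.eval, hs, hpv, hnv]
        simpa using this
  have := hent s hst
  rw [ceval_iff] at this
  obtain ⟨l, hlC, hleval⟩ := this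
  cases l with
  | pos v => simp [Lit.eval, hs, hlC] at hleval
  | neg v =>
    have hpv : Lit.pos v ∉ C := fun hp => hnt v hp hlC
    simp [Lit.eval, hs, hpv, hlC] at hleval

lemma mem_le_one {α : Type*} {C : List α} (h : C.length ≤ 1) {x : α} (hx : x ∈ C) :
    ∀ z ∈ C, z = x := by
  match C, h with
  | [], _ => simp at hx
  | [a], _ => simp at hx; subst hx; simp

lemma mem_le_two {α : Type*} {C : List α} (h : C.length ≤ 2) {x y : α}
    (hx : x ∈ C) (hy : y ∈ C) (hxy : x ≠ y) : ∀ z ∈ C, z = x ∨ z = y := by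
  match C, h with
  | [], _ => simp at hx
  | [a], _ =>
    simp at hx hy; subst hx; subst hy; exact absurd rfl hxy
  | [a, b], _ =>
    intro z hz
    simp at hx hy hz
    rcases hx with rfl | rfl <;> rcases hy with rfl | rfl <;> rcases hz with rfl | rfl <;> tauto

/-- from a family of entailed literals, build a term -/
lemma pick_term (P : (V → Bool) → Prop) :
    ∀ F : CNF V, (∀ C ∈ F, ∃ l ∈ C, ∀ s, P s → l.eval s = true) →
      ∃ tl : List (Lit V), (∀ l ∈ tl, ∀ s, P s → l.eval s = true) ∧
        ∀ s, Term.teval s tl = true → CNF.feval s F = true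
  | [], _ => ⟨[], by simp, by intro s _; simp [CNF.feval]⟩
  | C :: F, h => by
    obtain ⟨l, hlC, hl⟩ := h C (by simp)
    obtain ⟨tl, h1, h2⟩ := pick_term P F (fun C' hC' => h C' (by simp [hC']))
    refine ⟨l :: tl, ?_, ?_⟩
    · intro m hm s hs
      rcases List.mem_cons.mp hm with rfl | hm
      · exact hl s hs
      · exact h1 m hm s hs
    · intro s hs
      rw [teval_iff] at hs
      rw [feval_iff]
      intro D hD
      rcases List.mem_cons.mp hD with rfl | hD
      · exact (ceval_iff s D).mpr ⟨l, hlC, hs l (by simp)⟩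
      · exact (feval_iff s F).mp (h2 s ((teval_iff s tl).mpr
          (fun m hm => hs m (by simp [hm])))) D hD

end Helpers

theorem stmt8 {V : Type} (S : Finset (PLF V)) (φ ψ : PLF V) (θ θ' χ : CNF V)
    (hdef : ∃ t : List (Lit V), (∃ s, Term.teval s t = true) ∧
      ∀ s, (∀ σ ∈ S, σ.eval s = true) ↔ Term.teval s t = true)
    (heqv : ∀ s, (∀ σ ∈ S, σ.eval s = true) ↔ (θ.feval s && χ.feval s) = true)
    (hφ : ∀ s, (θ.feval s && χ.feval s) = true → (φ.and ψ.neg).eval s = true)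
    (hψ : ∀ s, (θ'.feval s && χ.feval s) = true → (φ.neg.and ψ).eval s = true)
    (hsat : (∃ s, (θ'.feval s && χ.feval s) = true) ↔ (∃ s, ∀ σ ∈ S, σ.eval s = true))
    (hmin : ∀ θ₂ θ'₂ χ₂ : CNF V,
      (∀ s, (∀ σ ∈ S, σ.eval s = true) ↔ (θ₂.feval s && χ₂.feval s) = true) →
      (∀ s, (θ₂.feval s && χ₂.feval s) = true → (φ.and ψ.neg).eval s = true) →
      (∀ s, (θ'₂.feval s && χ₂.feval s) = true → (φ.neg.and ψ).eval s = true) →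
      ((∃ s, (θ'₂.feval s && χ₂.feval s) = true) ↔ (∃ s, ∀ σ ∈ S, σ.eval s = true)) →
      θ.size + θ'.size + χ.size ≤ θ₂.size + θ'₂.size + χ₂.size) :
    ∃ t : List (Lit V), (∃ s, Term.teval s t = true) ∧
      ∀ s, (θ'.feval s && χ.feval s) = Term.teval s t := by
  classical
  obtain ⟨t, ⟨st, hstt⟩, hdef2⟩ := hdef
  have hSsat : ∃ s, ∀ σ ∈ S, σ.eval s = true := ⟨st, (hdef2 st).mpr hstt⟩
  obtain ⟨sA, hsA⟩ := hsat.mpr hSsat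
  have hsAθ' : θ'.feval sA = true := (Bool.and_eq_true _ _ ▸ hsA).1
  have hsAχ : χ.feval sA = true := (Bool.and_eq_true _ _ ▸ hsA).2
  have ht : ∀ s, Term.teval s t = true ↔ (θ.feval s && χ.feval s) = true :=
    fun s => (hdef2 s).symm.trans (heqv s)
  -- key claim: every clause of θ' ++ χ has a literal entailed by θ' ∧ χ
  have key : ∀ C ∈ θ' ++ χ, ∃ l ∈ C,
      ∀ s, (θ'.feval s && χ.feval s) = true → l.eval s = true := by
    intro C hC
    rcases List.mem_append.mp hC with hCθ' | hCχ
    · -- C ∈ θ' : surgery θ'₂ := pre ++ [l] :: post with l true at sA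
      obtain ⟨pre, post, hsplit⟩ := List.append_of_mem hCθ'
      have hCsA : Clause.ceval sA C = true :=
        (feval_iff sA θ').mp hsAθ' C hCθ'
      obtain ⟨l, hlC, hlsA⟩ := (ceval_iff sA C).mp hCsA
      have hsize := hmin θ (pre ++ [l] :: post) χ heqv hφ ?_ ?_
      · -- sizes force C.length ≤ 1, so C = [l]
        rw [hsplit] at hsize
        rw [size_split, size_split] at hsize
        have hlen : C.length ≤ 1 := by simp at hsize; omega
        have hCeq : C = [l] := by
          cases C with
          | nil => simp at hlC
          | cons a as =>
            cases as with
            | nil => simp at hlC; simp [hlC]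
            | cons b bs => simp at hlen
        refine ⟨l, hlC, fun s hs => ?_⟩
        have : θ'.feval s = true := (Bool.and_eq_true _ _ ▸ hs).1
        have := (feval_iff s θ').mp this C hCθ'
        rw [hCeq, ceval_iff] at this
        obtain ⟨m, hm, hme⟩ := this
        simp at hm; subst hm; exact hme
      · -- entailment for θ'₂ ∧ χ
        intro s hs
        have h1 : CNF.feval s (pre ++ [l] :: post) = true := (Bool.and_eq_true _ _ ▸ hs).1
        have h2 : χ.feval s = true := (Bool.and_eq_true _ _ ▸ hs).2
        apply hψ s
        rw [Bool.and_eq_true]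
        refine ⟨?_, h2⟩
        rw [hsplit, feval_iff]
        intro D hD
        rcases List.mem_append.mp hD with hD | hD
        · exact (feval_iff s _).mp h1 D (by simp [hD])
        · rcases List.mem_cons.mp hD with rfl | hD
          · -- D = C : derived from l
            have : Clause.ceval s [l] = true :=
              (feval_iff s _).mp h1 [l] (by simp)
            rw [ceval_iff] at this
            obtain ⟨m, hm, hme⟩ := this
            simp at hm
            exact (ceval_iff s D).mpr ⟨l, hlC, hm ▸ hme⟩
          · exact (feval_iff s _).mp h1 D (by simp [hD])
      · -- satisfiability of θ'₂ ∧ χ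
        refine ⟨fun _ => hSsat, fun _ => ⟨sA, ?_⟩⟩
        rw [Bool.and_eq_true]
        refine ⟨?_, hsAχ⟩
        rw [feval_iff]
        intro D hD
        rcases List.mem_append.mp hD with hD | hD
        · exact (feval_iff sA θ').mp hsAθ' D (by rw [hsplit]; simp [hD])
        · rcases List.mem_cons.mp hD with rfl | hD
          · exact (ceval_iff sA _).mpr ⟨l, by simp, hlsA⟩
          · exact (feval_iff sA θ').mp hsAθ' D (by rw [hsplit]; simp [hD])
    · -- C ∈ χ
      obtain ⟨pre, post, hsplit⟩ := List.append_of_mem hCχ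
      have hCsA : Clause.ceval sA C = true := (feval_iff sA χ).mp hsAχ C hCχ
      obtain ⟨l, hlC, hlsA⟩ := (ceval_iff sA C).mp hCsA
      by_cases htaut : ∃ v, Lit.pos v ∈ C ∧ Lit.neg v ∈ C
      · -- tautological clause: delete it, contradiction
        exfalso
        obtain ⟨v, hpv, hnv⟩ := htaut
        have hCtrue : ∀ s, Clause.ceval s C = true := by
          intro s
          cases hb : s v
          · exact (ceval_iff s C).mpr ⟨Lit.neg v, hnv, by simp [Lit.eval, hb]⟩
          · exact (ceval_iff s C).mpr ⟨Lit.pos v, hpv, by simp [Lit.eval, hb]⟩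
        have hχeq : ∀ s, CNF.feval s (pre ++ post) = χ.feval s := by
          intro s
          rw [Bool.eq_iff_iff, feval_iff, feval_iff, hsplit]
          constructor
          · intro h D hD
            rcases List.mem_append.mp hD with hD | hD
            · exact h D (by simp [hD])
            · rcases List.mem_cons.mp hD with rfl | hD
              · exact hCtrue s
              · exact h D (by simp [hD])
          · intro h D hD
            rcases List.mem_append.mp hD with hD | hD
            · exact h D (by simp [hD])
            · exact h D (by simp [hD])
        have hsize := hmin θ θ' (pre ++ post)
          (fun s => by rw [hχeq s]; exact heqv s)
          (fun s hs => hφ s (by rwa [hχeq s] at hs))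
          (fun s hs => hψ s (by rwa [hχeq s] at hs))
          (by constructor
              · intro _; exact hSsat
              · intro _; exact ⟨sA, by rw [Bool.and_eq_true]; exact ⟨hsAθ', by rw [hχeq]; exact hsAχ⟩⟩)
        rw [hsplit, size_split, size_append] at hsize
        have : C.length = 0 := by omega
        rw [List.length_eq_zero_iff] at this
        subst this; simp at hpv
      · -- non-tautological: get a t-entailed literal l₁ ∈ C
        have hentC : ∀ s, Term.teval s t = true → Clause.ceval s C = true := by
          intro s hs
          have := (ht s).mp hs
          exact (feval_iff s χ).mp (Bool.and_eq_true _ _ ▸ this).2 C hCχ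
        obtain ⟨l₁, hl₁C, hl₁t⟩ := term_clause_lit t C ⟨st, hstt⟩ hentC htaut
        by_cases hl₁sat : ∃ s, (θ'.feval s && χ.feval s) = true ∧ l₁.eval s = true
        · -- shrink C to [l₁] in χ
          obtain ⟨s₂, hs₂A, hs₂l₁⟩ := hl₁sat
          have hχ₂imp : ∀ s, CNF.feval s (pre ++ [l₁] :: post) = true → χ.feval s = true := by
            intro s h
            rw [hsplit, feval_iff]
            intro D hD
            rcases List.mem_append.mp hD with hD | hD
            · exact (feval_iff s _).mp h D (by simp [hD])
            · rcases List.mem_cons.mp hD with rfl | hD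
              · have : Clause.ceval s [l₁] = true := (feval_iff s _).mp h [l₁] (by simp)
                rw [ceval_iff] at this
                obtain ⟨m, hm, hme⟩ := this
                simp at hm
                exact (ceval_iff s D).mpr ⟨l₁, hl₁C, hm ▸ hme⟩
              · exact (feval_iff s _).mp h D (by simp [hD])
          have hχ₂rev : ∀ s, Term.teval s t = true → CNF.feval s (pre ++ [l₁] :: post) = true := by
            intro s hs
            have hχs : χ.feval s = true := (Bool.and_eq_true _ _ ▸ (ht s).mp hs).2
            rw [feval_iff]
            intro D hD
            rcases List.mem_append.mp hD with hD | hD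
            · exact (feval_iff s χ).mp hχs D (by rw [hsplit]; simp [hD])
            · rcases List.mem_cons.mp hD with rfl | hD
              · exact (ceval_iff s _).mpr ⟨l₁, by simp, hl₁t s hs⟩
              · exact (feval_iff s χ).mp hχs D (by rw [hsplit]; simp [hD])
          have hsize := hmin θ θ' (pre ++ [l₁] :: post) ?_ ?_ ?_ ?_
          · rw [hsplit, size_split, size_split] at hsize
            have hlen : C.length ≤ 1 := by simp at hsize; omega
            have hCeq : C = [l₁] := by
              cases C with
              | nil => simp at hl₁C
              | cons a as =>
                cases as with
                | nil => simp at hl₁C; simp [hl₁C]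
                | cons b bs => simp at hlen
            refine ⟨l₁, hl₁C, fun s hs => ?_⟩
            have : χ.feval s = true := (Bool.and_eq_true _ _ ▸ hs).2
            have := (feval_iff s χ).mp this C hCχ
            rw [hCeq, ceval_iff] at this
            obtain ⟨m, hm, hme⟩ := this
            simp at hm; subst hm; exact hme
          · intro s
            constructor
            · intro hs
              have hts := (hdef2 s).mp hs
              have hθχ := (heqv s).mp hs
              rw [Bool.and_eq_true]
              exact ⟨(Bool.and_eq_true _ _ ▸ hθχ).1, hχ₂rev s hts⟩
            · intro hs
              apply (heqv s).mpr
              rw [Bool.and_eq_true]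
              exact ⟨(Bool.and_eq_true _ _ ▸ hs).1, hχ₂imp s (Bool.and_eq_true _ _ ▸ hs).2⟩
          · intro s hs
            exact hφ s (by
              rw [Bool.and_eq_true]
              exact ⟨(Bool.and_eq_true _ _ ▸ hs).1, hχ₂imp s (Bool.and_eq_true _ _ ▸ hs).2⟩)
          · intro s hs
            exact hψ s (by
              rw [Bool.and_eq_true]
              exact ⟨(Bool.and_eq_true _ _ ▸ hs).1, hχ₂imp s (Bool.and_eq_true _ _ ▸ hs).2⟩)
          · refine ⟨fun _ => hSsat, fun _ => ⟨s₂, ?_⟩⟩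
            rw [Bool.and_eq_true]
            refine ⟨(Bool.and_eq_true _ _ ▸ hs₂A).1, ?_⟩
            have hχs₂ : χ.feval s₂ = true := (Bool.and_eq_true _ _ ▸ hs₂A).2
            rw [feval_iff]
            intro D hD
            rcases List.mem_append.mp hD with hD | hD
            · exact (feval_iff s₂ χ).mp hχs₂ D (by rw [hsplit]; simp [hD])
            · rcases List.mem_cons.mp hD with rfl | hD
              · exact (ceval_iff s₂ _).mpr ⟨l₁, by simp, hs₂l₁⟩
              · exact (feval_iff s₂ χ).mp hχs₂ D (by rw [hsplit]; simp [hD])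
        · -- A ⊨ ¬l₁ : move surgery, θ₂ := θ ++ [[l₁]], χ₂ := pre ++ post, θ'₂ := θ' ++ [[l]]
          push_neg at hl₁sat
          -- first, the move surgery bounds C.length by 2
          have hsize := hmin (θ ++ [[l₁]]) (θ' ++ [[l]]) (pre ++ post) ?_ ?_ ?_ ?_
          · rw [hsplit, size_split, size_append, size_append, size_append] at hsize
            simp [CNF.size] at hsize
            have hlen : C.length ≤ 2 := by omega
            have hne : l ≠ l₁ := by
              rintro rfl
              exact hl₁sat sA hsA hlsA
            refine ⟨l, hlC, fun s hs => ?_⟩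
            have h0 : χ.feval s = true := (Bool.and_eq_true _ _ ▸ hs).2
            have h1 := (feval_iff s χ).mp h0 C hCχ
            rw [ceval_iff] at h1
            obtain ⟨m, hm, hme⟩ := h1
            rcases mem_le_two hlen hlC hl₁C hne m hm with rfl | rfl
            · exact hme
            · exact absurd hme (hl₁sat s hs)
          · -- equivalence for θ₂ ∧ χ₂
            intro s
            constructor
            · intro hs
              have hts := (hdef2 s).mp hs
              have hθχ := (heqv s).mp hs
              have hθs : θ.feval s = true := (Bool.and_eq_true _ _ ▸ hθχ).1
              have hχs : χ.feval s = true := (Bool.and_eq_true _ _ ▸ hθχ).2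
              rw [Bool.and_eq_true]
              constructor
              · rw [feval_iff]
                intro D hD
                rcases List.mem_append.mp hD with hD | hD
                · exact (feval_iff s θ).mp hθs D hD
                · simp at hD; subst hD
                  exact (ceval_iff s _).mpr ⟨l₁, by simp, hl₁t s hts⟩
              · rw [feval_iff]
                intro D hD
                rcases List.mem_append.mp hD with hD | hD
                · exact (feval_iff s χ).mp hχs D (by rw [hsplit]; simp [hD])
                · exact (feval_iff s χ).mp hχs D (by rw [hsplit]; simp [hD])
            · intro hs
              have h1 : CNF.feval s (θ ++ [[l₁]]) = true := (Bool.and_eq_true _ _ ▸ hs).1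
              have h2 : CNF.feval s (pre ++ post) = true := (Bool.and_eq_true _ _ ▸ hs).2
              have hl₁s : l₁.eval s = true := by
                have : Clause.ceval s [l₁] = true := (feval_iff s _).mp h1 [l₁] (by simp)
                rw [ceval_iff] at this
                obtain ⟨m, hm, hme⟩ := this
                simp at hm; exact hm ▸ hme
              apply (heqv s).mpr
              rw [Bool.and_eq_true]
              constructor
              · rw [feval_iff]
                intro D hD
                exact (feval_iff s _).mp h1 D (by simp [hD])
              · rw [hsplit, feval_iff]
                intro D hD
                rcases List.mem_append.mp hD with hD | hD
                · exact (feval_iff s _).mp h2 D (by simp [hD])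
                · rcases List.mem_cons.mp hD with rfl | hD
                  · exact (ceval_iff s D).mpr ⟨l₁, hl₁C, hl₁s⟩
                  · exact (feval_iff s _).mp h2 D (by simp [hD])
            -- defer: numbered goals
          · intro s hs
            apply hφ s
            apply (heqv s).mp
            -- reuse equivalence direction: reconstruct
            have h1 : CNF.feval s (θ ++ [[l₁]]) = true := (Bool.and_eq_true _ _ ▸ hs).1
            have h2 : CNF.feval s (pre ++ post) = true := (Bool.and_eq_true _ _ ▸ hs).2
            have hl₁s : l₁.eval s = true := by
              have : Clause.ceval s [l₁] = true := (feval_iff s _).mp h1 [l₁] (by simp)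
              rw [ceval_iff] at this
              obtain ⟨m, hm, hme⟩ := this
              simp at hm; exact hm ▸ hme
            apply (heqv s).mpr
            rw [Bool.and_eq_true]
            constructor
            · rw [feval_iff]
              intro D hD
              exact (feval_iff s _).mp h1 D (by simp [hD])
            · rw [hsplit, feval_iff]
              intro D hD
              rcases List.mem_append.mp hD with hD | hD
              · exact (feval_iff s _).mp h2 D (by simp [hD])
              · rcases List.mem_cons.mp hD with rfl | hD
                · exact (ceval_iff s D).mpr ⟨l₁, hl₁C, hl₁s⟩
                · exact (feval_iff s _).mp h2 D (by simp [hD])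
          · intro s hs
            apply hψ s
            have h1 : CNF.feval s (θ' ++ [[l]]) = true := (Bool.and_eq_true _ _ ▸ hs).1
            have h2 : CNF.feval s (pre ++ post) = true := (Bool.and_eq_true _ _ ▸ hs).2
            have hls : l.eval s = true := by
              have : Clause.ceval s [l] = true := (feval_iff s _).mp h1 [l] (by simp)
              rw [ceval_iff] at this
              obtain ⟨m, hm, hme⟩ := this
              simp at hm; exact hm ▸ hme
            rw [Bool.and_eq_true]
            constructor
            · rw [feval_iff]
              intro D hD
              exact (feval_iff s _).mp h1 D (by simp [hD])
            · rw [hsplit, feval_iff]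
              intro D hD
              rcases List.mem_append.mp hD with hD | hD
              · exact (feval_iff s _).mp h2 D (by simp [hD])
              · rcases List.mem_cons.mp hD with rfl | hD
                · exact (ceval_iff s D).mpr ⟨l, hlC, hls⟩
                · exact (feval_iff s _).mp h2 D (by simp [hD])
          · refine ⟨fun _ => hSsat, fun _ => ⟨sA, ?_⟩⟩
            rw [Bool.and_eq_true]
            constructor
            · rw [feval_iff]
              intro D hD
              rcases List.mem_append.mp hD with hD | hD
              · exact (feval_iff sA θ').mp hsAθ' D hD
              · simp at hD; subst hD
                exact (ceval_iff sA _).mpr ⟨l, by simp, hlsA⟩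
            · rw [feval_iff]
              intro D hD
              rcases List.mem_append.mp hD with hD | hD
              · exact (feval_iff sA χ).mp hsAχ D (by rw [hsplit]; simp [hD])
              · exact (feval_iff sA χ).mp hsAχ D (by rw [hsplit]; simp [hD])
  -- build the term
  obtain ⟨tl, htl1, htl2⟩ :=
    pick_term (fun s => (θ'.feval s && χ.feval s) = true) (θ' ++ χ) key
  refine ⟨tl, ⟨sA, ?_⟩, ?_⟩
  · rw [teval_iff]
    intro m hm
    exact htl1 m hm sA hsA
  · intro s
    rw [Bool.eq_iff_iff]
    constructor
    · intro hs
      rw [teval_iff]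
      intro m hm
      exact htl1 m hm s hs
    · intro hs
      have := htl2 s hs
      rw [feval_iff] at this
      rw [Bool.and_eq_true, feval_iff, feval_iff]
      exact ⟨fun D hD => this D (by simp [hD]), fun D hD => this D (by simp [hD])⟩
end

section
/- If s is a τ-assignment over a finite vocabulary τ, and λ₁, λ₂ ⊆ s are sets of literals true in s with |λ₁| < |λ₂|, then any CNF triple (θ₂, θ'₂, χ₂) such that θ₂ ∧ χ₂ defines s and θ'₂ ∧ χ₂ defines s △ λ₂ has total size at least |τ| + |λ₂|, while there is a triple (θ₁, θ'₁, χ₁) with θ₁ ∧ χ₁ defining s and θ'₁ ∧ χ₁ defining s △ λ₁ of total size exactly |τ| + |λ₁|. -/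
deriving instance DecidableEq for Lit

set_option linter.unusedSectionVars false
section Aux
variable {V : Type} [DecidableEq V]

def litOf (s : V → Bool) (v : V) : Lit V := if s v then Lit.pos v else Lit.neg v

lemma litOf_eval (s t : V → Bool) (v : V) :
    (litOf s v).eval t = true ↔ t v = s v := by
  unfold litOf; cases hs : s v <;> simp [Lit.eval, hs]

lemma litOf_var (s : V → Bool) (v : V) : (litOf s v).var = v := by
  unfold litOf; split <;> rfl

lemma litOf_inj (s : V → Bool) : Function.Injective (litOf s) := by
  intro a b h
  have := congrArg Lit.var h
  rwa [litOf_var, litOf_var] at this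

lemma key (F : CNF V) (s : V → Bool) (h : ∀ t, F.feval t = true ↔ t = s) (v : V) :
    litOf s v ∈ F.flatten := by
  by_contra hmem
  set t := Function.update s v (!(s v)) with ht
  have hts : F.feval s = true := (h s).mpr rfl
  have htt : F.feval t = true := by
    rw [CNF.feval, List.all_eq_true] at hts ⊢
    intro C hC
    have hc := hts C hC
    rw [Clause.ceval, List.any_eq_true] at hc ⊢
    obtain ⟨m, hm, hme⟩ := hc
    refine ⟨m, hm, ?_⟩
    by_cases hv : m.var = v
    · exfalso
      apply hmem
      have hml : m = litOf s v := by
        cases m with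
        | pos w =>
          simp only [Lit.var] at hv; subst hv
          simp only [Lit.eval] at hme
          simp [litOf, hme]
        | neg w =>
          simp only [Lit.var] at hv; subst hv
          simp only [Lit.eval, Bool.not_eq_true'] at hme
          simp [litOf, hme]
      rw [← hml]
      exact List.mem_flatten.mpr ⟨C, hC, hm⟩
    · cases m with
      | pos w =>
        have hw : w ≠ v := hv
        simpa [Lit.eval, ht, Function.update_of_ne hw] using hme
      | neg w =>
        have hw : w ≠ v := hv
        simpa [Lit.eval, ht, Function.update_of_ne hw] using hme
  have heq := congrFun ((h t).mp htt) v
  simp [ht, Function.update_self] at heq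

def litSet (F : CNF V) : Finset (Lit V) := F.flatten.toFinset

lemma litSet_card_le (F : CNF V) : (litSet F).card ≤ F.size := by
  calc (litSet F).card ≤ F.flatten.length := List.toFinset_card_le _
  _ = F.size := List.length_flatten

lemma feval_append (F G : CNF V) (t : V → Bool) :
    (F ++ G).feval t = (F.feval t && G.feval t) := List.all_append

lemma feval_singles (s t : V → Bool) (l : List V) :
    CNF.feval t (l.map fun v => [litOf s v]) = true ↔ ∀ v ∈ l, t v = s v := by
  simp [CNF.feval, Clause.ceval, List.all_eq_true, litOf_eval]

lemma size_singles (f : V → Lit V) (l : List V) :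
    CNF.size (l.map fun v => [f v]) = l.length := by
  simp [CNF.size, Function.comp_def]

end Aux
theorem stmt11 {V : Type} [Fintype V] [DecidableEq V] (s : V → Bool)
    (L1 L2 : Finset V) (hcard : L1.card < L2.card) :
    (∀ θ₂ θ'₂ χ₂ : CNF V,
      (∀ t, (θ₂.feval t && χ₂.feval t) = true ↔ t = s) →
      (∀ t, (θ'₂.feval t && χ₂.feval t) = true ↔
        t = (fun v => if v ∈ L2 then !(s v) else s v)) →
      Fintype.card V + L2.card ≤ θ₂.size + θ'₂.size + χ₂.size) ∧
    (∃ θ₁ θ'₁ χ₁ : CNF V,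
      (∀ t, (θ₁.feval t && χ₁.feval t) = true ↔ t = s) ∧
      (∀ t, (θ'₁.feval t && χ₁.feval t) = true ↔
        t = (fun v => if v ∈ L1 then !(s v) else s v)) ∧
      θ₁.size + θ'₁.size + χ₁.size = Fintype.card V + L1.card) := by
  constructor
  · intro θ₂ θ'₂ χ₂ h2 h2'
    set s' : V → Bool := fun v => if v ∈ L2 then !(s v) else s v with hs'
    have k1 : ∀ v : V, litOf s v ∈ (θ₂ ++ χ₂).flatten :=
      key _ s (fun t => by rw [feval_append]; exact h2 t)
    have k2 : ∀ v : V, litOf s' v ∈ (θ'₂ ++ χ₂).flatten :=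
      key _ s' (fun t => by rw [feval_append]; exact h2' t)
    set T := litSet θ₂ with hT
    set T' := litSet θ'₂ with hT'
    set C := litSet χ₂ with hC
    set S : Finset (Lit V) := Finset.univ.image (litOf s) with hS
    set S' : Finset (Lit V) := Finset.univ.image (litOf s') with hS'
    have hsub : S ⊆ T ∪ C := by
      intro x hx
      obtain ⟨v, -, rfl⟩ := Finset.mem_image.mp hx
      have := k1 v
      rw [List.flatten_append, List.mem_append] at this
      simpa [hT, hC, litSet, Finset.mem_union, List.mem_toFinset] using this
    have hsub' : S' ⊆ T' ∪ C := by
      intro x hx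
      obtain ⟨v, -, rfl⟩ := Finset.mem_image.mp hx
      have := k2 v
      rw [List.flatten_append, List.mem_append] at this
      simpa [hT', hC, litSet, Finset.mem_union, List.mem_toFinset] using this
    have hScard : S.card = Fintype.card V := by
      rw [hS, Finset.card_image_of_injective _ (litOf_inj s), Finset.card_univ]
    have hS'card : S'.card = Fintype.card V := by
      rw [hS', Finset.card_image_of_injective _ (litOf_inj s'), Finset.card_univ]
    have n1 : S.card ≤ (S ∩ T).card + (S ∩ C).card := by
      calc S.card = (S ∩ (T ∪ C)).card := by rw [Finset.inter_eq_left.mpr hsub]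
      _ = ((S ∩ T) ∪ (S ∩ C)).card := by rw [Finset.inter_union_distrib_left]
      _ ≤ _ := Finset.card_union_le _ _
    have n2 : S'.card ≤ (S' ∩ T').card + (S' ∩ C).card := by
      calc S'.card = (S' ∩ (T' ∪ C)).card := by rw [Finset.inter_eq_left.mpr hsub']
      _ = ((S' ∩ T') ∪ (S' ∩ C)).card := by rw [Finset.inter_union_distrib_left]
      _ ≤ _ := Finset.card_union_le _ _
    have hInt : (S ∩ S').card + L2.card ≤ Fintype.card V := by
      have hsub2 : S ∩ S' ⊆ (Finset.univ \ L2).image (litOf s) := by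
        intro x hx
        rw [Finset.mem_inter] at hx
        obtain ⟨v, -, rfl⟩ := Finset.mem_image.mp hx.1
        obtain ⟨w, -, hw⟩ := Finset.mem_image.mp hx.2
        have hvw : w = v := by
          have := congrArg Lit.var hw
          rwa [litOf_var, litOf_var] at this
        subst hvw
        have heq : s w = s' w := by
          have h1 : (litOf s' w).eval s = true ↔ s w = s' w := litOf_eval s' s w
          rw [hw] at h1
          exact h1.mp ((litOf_eval s s w).mpr rfl)
        have hwL2 : w ∉ L2 := by
          intro hmem
          rw [hs'] at heq
          simp [hmem] at heq
        exact Finset.mem_image.mpr ⟨w, Finset.mem_sdiff.mpr ⟨Finset.mem_univ w, hwL2⟩, rfl⟩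
      have := Finset.card_le_card hsub2
      rw [Finset.card_image_of_injective _ (litOf_inj s),
        Finset.card_sdiff_of_subset (Finset.subset_univ L2), Finset.card_univ] at this
      have hle : L2.card ≤ Fintype.card V := by
        simpa [Finset.card_univ] using Finset.card_le_card (Finset.subset_univ L2)
      omega
    have hC2 : (S ∩ C).card + (S' ∩ C).card ≤ C.card + (S ∩ S').card := by
      have e := Finset.card_union_add_card_inter (S ∩ C) (S' ∩ C)
      have h1 : ((S ∩ C) ∪ (S' ∩ C)).card ≤ C.card :=
        Finset.card_le_card (by intro x hx; rcases Finset.mem_union.mp hx with h | h <;>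
          exact (Finset.mem_inter.mp h).2)
      have h2' : ((S ∩ C) ∩ (S' ∩ C)).card ≤ (S ∩ S').card :=
        Finset.card_le_card (by
          intro x hx
          simp only [Finset.mem_inter] at hx ⊢
          exact ⟨hx.1.1, hx.2.1⟩)
      omega
    have b1 : (S ∩ T).card ≤ θ₂.size := le_trans
      (Finset.card_le_card (Finset.inter_subset_right)) (litSet_card_le θ₂)
    have b2 : (S' ∩ T').card ≤ θ'₂.size := le_trans
      (Finset.card_le_card (Finset.inter_subset_right)) (litSet_card_le θ'₂)
    have b3 : C.card ≤ χ₂.size := litSet_card_le χ₂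
    omega
  · set s1 : V → Bool := fun v => if v ∈ L1 then !(s v) else s v with hs1
    refine ⟨L1.toList.map fun v => [litOf s v],
           L1.toList.map fun v => [litOf s1 v],
           (Finset.univ \ L1).toList.map fun v => [litOf s v], ?_, ?_, ?_⟩
    · intro t
      rw [Bool.and_eq_true, feval_singles, feval_singles]
      constructor
      · rintro ⟨ha, hb⟩
        funext v
        by_cases hv : v ∈ L1
        · exact ha v ((Finset.mem_toList).mpr hv)
        · exact hb v ((Finset.mem_toList).mpr
            (Finset.mem_sdiff.mpr ⟨Finset.mem_univ v, hv⟩))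
      · rintro rfl; exact ⟨fun v _ => rfl, fun v _ => rfl⟩
    · intro t
      rw [Bool.and_eq_true, feval_singles, feval_singles]
      constructor
      · rintro ⟨ha, hb⟩
        funext v
        by_cases hv : v ∈ L1
        · exact ha v ((Finset.mem_toList).mpr hv)
        · rw [hb v ((Finset.mem_toList).mpr
            (Finset.mem_sdiff.mpr ⟨Finset.mem_univ v, hv⟩)), hs1]
          simp [hv]
      · rintro rfl
        refine ⟨fun v _ => rfl, fun v hv => ?_⟩
        rw [Finset.mem_toList, Finset.mem_sdiff] at hv
        rw [hs1]; simp [hv.2]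
    · rw [size_singles, size_singles, size_singles, Finset.length_toList,
        Finset.length_toList, Finset.card_sdiff_of_subset (Finset.subset_univ L1), Finset.card_univ]
      have hle : L1.card ≤ Fintype.card V := by
        simpa [Finset.card_univ] using Finset.card_le_card (Finset.subset_univ L1)
      omega
end

section
/- Let τ = {p₁,...,pₙ, p₁ᵈ,...,pₙᵈ, q₁,...,q_m} and let ξ be a propositional formula over p's and q's. Define φ = (⋀ᵢ (pᵢ ∨ pᵢᵈ)) ∧ ξ[pᵢᵈ replacing ¬pᵢ as fresh variables], ψ = ⋀ᵢ (¬pᵢ ∧ ¬pᵢᵈ), and let s be the assignment making all pᵢ and pᵢᵈ false. Then ψ ⊨ ¬φ, and there exists a set λ of n literals true in s with s △ λ ⊨ φ if and only if the quantified Boolean formula ∃p₁…∃pₙ ∀q₁…∀q_m ξ(p₁,…,pₙ,q₁,…,q_m) is true. -/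
def Pv (n m : ℕ) (i : Fin n) : (Fin n ⊕ Fin n) ⊕ Fin m := Sum.inl (Sum.inl i)
def Pd (n m : ℕ) (i : Fin n) : (Fin n ⊕ Fin n) ⊕ Fin m := Sum.inl (Sum.inr i)
def Qv (n m : ℕ) (j : Fin m) : (Fin n ⊕ Fin n) ⊕ Fin m := Sum.inr j

/-- `⋀ i, (pᵢ ∨ pᵢᵈ)` conjoined with `ξ'`. -/
def phi17 (n m : ℕ) (ξ' : PLF ((Fin n ⊕ Fin n) ⊕ Fin m)) : PLF ((Fin n ⊕ Fin n) ⊕ Fin m) :=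
  PLF.and
    ((List.finRange n).foldr
      (fun i acc => PLF.and (PLF.or (PLF.var (Pv n m i)) (PLF.var (Pd n m i))) acc)
      (PLF.neg PLF.bot))
    ξ'

/-- `⋀ i, (¬pᵢ ∧ ¬pᵢᵈ)`. -/
def psi17 (n m : ℕ) : PLF ((Fin n ⊕ Fin n) ⊕ Fin m) :=
  (List.finRange n).foldr
    (fun i acc => PLF.and (PLF.and (PLF.neg (PLF.var (Pv n m i))) (PLF.neg (PLF.var (Pd n m i)))) acc)
    (PLF.neg PLF.bot)

lemma foldr_and_eval {V α : Type} (s : V → Bool) (f : α → PLF V) (l : List α) :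
    (l.foldr (fun i acc => PLF.and (f i) acc) (PLF.neg PLF.bot)).eval s
      = l.all (fun i => (f i).eval s) := by
  induction l with
  | nil => simp [PLF.eval]
  | cons a l ih => simp [PLF.eval, ih]

theorem stmt17 (n m : ℕ) (hn : 0 < n)
    (ξ : PLF (Fin n ⊕ Fin m)) (ξ' : PLF ((Fin n ⊕ Fin n) ⊕ Fin m))
    (hξ' : ∀ s : ((Fin n ⊕ Fin n) ⊕ Fin m) → Bool,
      (∀ i, s (Pd n m i) = !(s (Pv n m i))) →
      ξ'.eval s = ξ.eval (fun x => match x with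
        | Sum.inl i => s (Pv n m i)
        | Sum.inr j => s (Qv n m j))) :
    (∀ s, (psi17 n m).eval s = true → (phi17 n m ξ').eval s = false) ∧
    ((∃ L : Finset (Fin n ⊕ Fin n), L.card = n ∧
        ∀ t : ((Fin n ⊕ Fin n) ⊕ Fin m) → Bool,
          (∀ i, t (Pv n m i) = decide (Sum.inl i ∈ L)) →
          (∀ i, t (Pd n m i) = decide (Sum.inr i ∈ L)) →
          (phi17 n m ξ').eval t = true) ↔
      (∃ a : Fin n → Bool, ∀ b : Fin m → Bool,
        ξ.eval (fun x => match x with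
          | Sum.inl i => a i
          | Sum.inr j => b j) = true)) := by
  have phi_eval : ∀ s, (phi17 n m ξ').eval s =
      (((List.finRange n).all fun i => (s (Pv n m i) || s (Pd n m i))) && ξ'.eval s) := by
    intro s
    have := foldr_and_eval s (fun i => PLF.or (PLF.var (Pv n m i)) (PLF.var (Pd n m i)))
      (List.finRange n)
    simp only [phi17, PLF.eval, this]
  have psi_eval : ∀ s, (psi17 n m).eval s =
      ((List.finRange n).all fun i => (!s (Pv n m i) && !s (Pd n m i))) := by
    intro s
    have := foldr_and_eval s
      (fun i => PLF.and (PLF.neg (PLF.var (Pv n m i))) (PLF.neg (PLF.var (Pd n m i))))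
      (List.finRange n)
    simp only [psi17, this]
    rfl
  constructor
  · intro s hs
    rw [psi_eval] at hs
    rw [phi_eval]
    have h0 : (⟨0, hn⟩ : Fin n) ∈ List.finRange n := List.mem_finRange _
    have := (List.all_eq_true.mp hs) _ h0
    simp only [Bool.and_eq_true, Bool.not_eq_true'] at this
    apply Bool.and_eq_false_iff.mpr
    left
    apply List.all_eq_false.mpr
    exact ⟨⟨0, hn⟩, h0, by simp [this.1, this.2]⟩
  · constructor
    · rintro ⟨L, hcard, hL⟩
      -- exactly one of inl i, inr i in L
      have hmem : ∀ i : Fin n, Sum.inl i ∈ L ∨ Sum.inr i ∈ L := by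
        intro i
        by_contra hc
        push_neg at hc
        set t : ((Fin n ⊕ Fin n) ⊕ Fin m) → Bool := fun x => match x with
          | Sum.inl (Sum.inl i) => decide (Sum.inl i ∈ L)
          | Sum.inl (Sum.inr i) => decide (Sum.inr i ∈ L)
          | Sum.inr _ => false with ht
        have := hL t (fun i => rfl) (fun i => rfl)
        rw [phi_eval] at this
        have h1 := (List.all_eq_true.mp (Bool.and_eq_true_iff.mp this).1) i (List.mem_finRange i)
        simp only [Pv, Pd, ht, hc.1, hc.2, decide_eq_true_eq] at h1
        simp at h1
      have huniq : ∀ i : Fin n, ¬(Sum.inl i ∈ L ∧ Sum.inr i ∈ L) := by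
        intro i hi
        have himg : L.image (Sum.elim id id) = Finset.univ := by
          apply Finset.eq_univ_of_forall
          intro j
          rcases hmem j with h | h
          · exact Finset.mem_image.mpr ⟨_, h, rfl⟩
          · exact Finset.mem_image.mpr ⟨_, h, rfl⟩
        have hinj : Set.InjOn (Sum.elim id id) (L : Set (Fin n ⊕ Fin n)) := by
          apply Finset.card_image_iff.mp
          rw [himg, hcard, Finset.card_univ, Fintype.card_fin]
        have := hinj (Finset.mem_coe.mpr hi.1) (Finset.mem_coe.mpr hi.2) rfl
        exact Sum.inl_ne_inr this
      refine ⟨fun i => decide (Sum.inl i ∈ L), fun b => ?_⟩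
      set t : ((Fin n ⊕ Fin n) ⊕ Fin m) → Bool := fun x => match x with
        | Sum.inl (Sum.inl i) => decide (Sum.inl i ∈ L)
        | Sum.inl (Sum.inr i) => decide (Sum.inr i ∈ L)
        | Sum.inr j => b j with ht
      have hphit := hL t (fun i => rfl) (fun i => rfl)
      rw [phi_eval] at hphit
      have hxi' := (Bool.and_eq_true_iff.mp hphit).2
      have hd : ∀ i, t (Pd n m i) = !(t (Pv n m i)) := by
        intro i
        simp only [Pd, Pv, ht]
        rcases hmem i with h | h
        · have : Sum.inr i ∉ L := fun h2 => huniq i ⟨h, h2⟩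
          simp [h, this]
        · have : Sum.inl i ∉ L := fun h2 => huniq i ⟨h2, h⟩
          simp [h, this]
      have := hξ' t hd
      rw [this] at hxi'
      convert hxi' using 2
      funext x
      cases x <;> rfl
    · rintro ⟨a, ha⟩
      refine ⟨(Finset.univ.filter fun i => a i = true).image Sum.inl ∪
              (Finset.univ.filter fun i => ¬(a i = true)).image Sum.inr, ?_, ?_⟩
      · rw [Finset.card_union_of_disjoint, Finset.card_image_of_injective _ Sum.inl_injective,
          Finset.card_image_of_injective _ Sum.inr_injective,
          Finset.card_filter_add_card_filter_not, Finset.card_univ, Fintype.card_fin]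
        simp [Finset.disjoint_left]
      · intro t hPv hPd
        have hinl : ∀ i : Fin n,
            (Sum.inl i ∈ (Finset.univ.filter fun i => a i = true).image Sum.inl ∪
              (Finset.univ.filter fun i => ¬(a i = true)).image Sum.inr) ↔ a i = true := by
          intro i; simp [Sum.inl_injective.eq_iff]
        have hinr : ∀ i : Fin n,
            (Sum.inr i ∈ (Finset.univ.filter fun i => a i = true).image Sum.inl ∪
              (Finset.univ.filter fun i => ¬(a i = true)).image Sum.inr) ↔ ¬(a i = true) := by
          intro i; simp [Sum.inr_injective.eq_iff]
        have hv : ∀ i, t (Pv n m i) = a i := by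
          intro i; rw [hPv i]; simp [hinl i]
        have hdv : ∀ i, t (Pd n m i) = !(a i) := by
          intro i; rw [hPd i]; simp [hinr i]
        rw [phi_eval]
        apply Bool.and_eq_true_iff.mpr
        constructor
        · apply List.all_eq_true.mpr
          intro i _
          rw [hv i, hdv i]; simp
        · have hd : ∀ i, t (Pd n m i) = !(t (Pv n m i)) := by
            intro i; rw [hv i, hdv i]
          rw [hξ' t hd]
          have := ha (fun j => t (Qv n m j))
          convert this using 2
          funext x
          cases x with
          | inl i => exact hv i
          | inr j => rfl
end
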